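/- Let (G,+,0) be an abelian group, let B ⊆ G \ {0} be a finite subset, and for each b ∈ B let w_b be a positive integer. Then there is a sum-free subset A ⊆ B with ∑_{a∈A} w_a ≥ (1/4)·∑_{b∈B} w_b. -/

import Mathlib

namespace Erdos1934Aux

noncomputable def rep (z : AddCircle (1:ℚ)) : ℚ := (AddCircle.equivIco 1 0 z : ℚ)

lemma rep_mem (z : AddCircle (1:ℚ)) : rep z ∈ Set.Ico (0:ℚ) 1 := by
  have := (AddCircle.equivIco 1 0 z).2
  simpa [rep] using this

lemma coe_int_zero (k : ℤ) : ((k:ℚ) : AddCircle (1:ℚ)) = 0 := by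
  rw [AddCircle.coe_eq_zero_iff]; exact ⟨k, by simp⟩

lemma coe_eq_coe {a b : ℚ} (h : ∃ k : ℤ, a - b = k) : (a : AddCircle (1:ℚ)) = b := by
  obtain ⟨k, hk⟩ := h
  have h2 : (a : AddCircle (1:ℚ)) - (b : AddCircle (1:ℚ)) = ((a - b : ℚ) : AddCircle (1:ℚ)) := by
    norm_cast
  have h3 : (a : AddCircle (1:ℚ)) - b = 0 := by rw [h2, hk]; exact coe_int_zero k
  exact sub_eq_zero.mp h3

lemma coe_inj_int {a b : ℚ} (h : (a : AddCircle (1:ℚ)) = b) : ∃ k : ℤ, a - b = k := by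
  have h2 : ((a - b : ℚ) : AddCircle (1:ℚ)) = 0 := by
    have h3 : ((a - b : ℚ) : AddCircle (1:ℚ)) = (a : AddCircle (1:ℚ)) - b := by norm_cast
    rw [h3, h, sub_self]
  rw [AddCircle.coe_eq_zero_iff] at h2
  obtain ⟨n, hn⟩ := h2
  exact ⟨n, by simpa using hn.symm⟩

lemma rep_coe_fract (q : ℚ) : rep (q : AddCircle (1:ℚ)) = Int.fract q := by
  simp [rep, AddCircle.coe_equivIco_mk_apply]

lemma rep_coe {q : ℚ} (h : q ∈ Set.Ico (0:ℚ) 1) : rep (q : AddCircle (1:ℚ)) = q := by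
  rw [rep_coe_fract, Int.fract_eq_self.2 (by simpa using h)]

lemma coe_rep (z : AddCircle (1:ℚ)) : ((rep z : ℚ) : AddCircle (1:ℚ)) = z := by
  induction z using QuotientAddGroup.induction_on with
  | H q =>
    rw [rep_coe_fract]
    refine coe_eq_coe ⟨-⌊q⌋, ?_⟩
    rw [Int.fract]; push_cast; ring

lemma torsion (z : AddCircle (1:ℚ)) : IsOfFinAddOrder z := by
  induction z using QuotientAddGroup.induction_on with
  | H q =>
    rw [isOfFinAddOrder_iff_nsmul_eq_zero]
    refine ⟨q.den, q.pos, ?_⟩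
    have h1 : q.den • (q : AddCircle (1:ℚ)) = ((q.den • q : ℚ) : AddCircle (1:ℚ)) := by norm_cast
    rw [h1]
    have h2 : (q.den • q : ℚ) = (q.num : ℚ) := by
      rw [nsmul_eq_mul, mul_comm, Rat.mul_den_eq_num]
    rw [h2]; exact coe_int_zero q.num

def Imid : Set (AddCircle (1:ℚ)) := {z | 1/3 < rep z ∧ rep z ≤ 2/3}

lemma Imid_sumfree {x y : AddCircle (1:ℚ)} (hx : x ∈ Imid) (hy : y ∈ Imid) : x + y ∉ Imid := by
  intro hxy
  obtain ⟨hx1, hx2⟩ := hx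
  obtain ⟨hy1, hy2⟩ := hy
  obtain ⟨hz1, hz2⟩ := hxy
  have hxy_coe : ((rep x + rep y : ℚ) : AddCircle (1:ℚ)) = x + y := by
    have h3 : ((rep x + rep y : ℚ) : AddCircle (1:ℚ)) = (↑(rep x) + ↑(rep y) : AddCircle (1:ℚ)) := by
      norm_cast
    rw [h3, coe_rep, coe_rep]
  have h := coe_inj_int (hxy_coe.trans (coe_rep (x+y)).symm)
  obtain ⟨k, hk⟩ := h
  have hz0 := (rep_mem (x+y)).1
  have hz3 := (rep_mem (x+y)).2
  have hk1 : (-2 : ℤ) < k := by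
    have : (-2 : ℚ) < k := by linarith
    exact_mod_cast this
  have hk2 : k < 1 := by
    have : (k : ℚ) < 1 := by linarith
    exact_mod_cast this
  interval_cases k <;> push_cast at hk <;> linarith

noncomputable def iota (N : ℕ) (x : ZMod N) : AddCircle (1:ℚ) := (((x.val : ℚ)/N : ℚ) : AddCircle (1:ℚ))

lemma iota_natCast (N : ℕ) [NeZero N] (S : ℕ) :
    iota N (S : ZMod N) = (((S:ℚ)/N : ℚ) : AddCircle (1:ℚ)) := by
  rw [iota, ZMod.val_natCast]
  refine coe_eq_coe ⟨-(S/N : ℕ), ?_⟩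
  have hN : (N:ℚ) ≠ 0 := Nat.cast_ne_zero.2 (NeZero.ne N)
  have key : ((S % N : ℕ):ℚ) = (S:ℚ) - (N:ℚ)*((S/N:ℕ):ℚ) := by
    have h := Nat.mod_add_div S N
    have h' : ((S % N : ℕ):ℚ) + (N:ℚ) * ((S/N:ℕ):ℚ) = (S:ℚ) := by exact_mod_cast h
    linarith
  have hcast : (((-(S/N:ℕ) : ℤ)) : ℚ) = -(((S/N:ℕ)):ℚ) := by rw [Int.cast_neg, Int.cast_natCast]
  rw [key, hcast]
  field_simp
  ring

lemma iota_mem_iff (N : ℕ) [NeZero N] (x : ZMod N) :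
    iota N x ∈ Imid ↔ (N < 3 * x.val ∧ 3 * x.val ≤ 2 * N) := by
  have hvlt : x.val < N := ZMod.val_lt x
  have hN : (0:ℚ) < N := by exact_mod_cast Nat.pos_of_ne_zero (NeZero.ne N)
  have hmem : ((x.val : ℚ)/N) ∈ Set.Ico (0:ℚ) 1 := by
    constructor
    · positivity
    · rw [div_lt_one hN]; exact_mod_cast hvlt
  rw [Imid, Set.mem_setOf_eq, iota, rep_coe hmem]
  rw [lt_div_iff₀ hN, div_le_iff₀ hN]
  constructor
  · rintro ⟨h1, h2⟩
    refine ⟨?_, ?_⟩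
    · have : (N:ℚ) < 3 * x.val := by linarith
      exact_mod_cast this
    · have : 3 * (x.val:ℚ) ≤ 2 * N := by linarith
      exact_mod_cast this
  · rintro ⟨h1, h2⟩
    have h1' : (N:ℚ) < 3 * x.val := by exact_mod_cast h1
    have h2' : 3 * (x.val:ℚ) ≤ 2 * N := by exact_mod_cast h2
    constructor <;> linarith


open Finset

lemma fiber_card {Ω : Type*} [Fintype Ω] [AddCommGroup Ω] [DecidableEq Ω] {N : ℕ}
    (f : Ω →+ ZMod N) {v : ZMod N} (t0 : Ω) (ht0 : f t0 = v) :
    (univ.filter (fun t => f t = v)).card = (univ.filter (fun t => f t = 0)).card := by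
  apply Finset.card_bij' (fun t _ => t - t0) (fun t _ => t + t0)
  · intro a ha
    simp only [mem_filter, mem_univ, true_and] at ha ⊢
    rw [map_sub, ha, ht0, sub_self]
  · intro a ha
    simp only [mem_filter, mem_univ, true_and] at ha ⊢
    rw [map_add, ha, ht0, zero_add]
  · intro a _; abel
  · intro a _; abel

lemma count_main {N : ℕ} [NeZero N] {Ω : Type*} [Fintype Ω] [AddCommGroup Ω] [DecidableEq Ω]
    (f : Ω →+ ZMod N) {v : ZMod N} (hv : v ≠ 0) (t1 : Ω) (ht1 : f t1 = v) :
    Fintype.card Ω ≤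
      4 * (univ.filter (fun t => N < 3 * (f t).val ∧ 3 * (f t).val ≤ 2 * N)).card := by
  classical
  set P : ZMod N → Prop := fun x => N < 3 * x.val ∧ 3 * x.val ≤ 2 * N with hP
  set T : Finset (ZMod N) := univ.image f with hT
  set n := T.card with hn
  set c0 := (univ.filter (fun t => f t = 0)).card with hc0
  have hfib : ∀ v ∈ T, (univ.filter (fun t => f t = v)).card = c0 := by
    intro v hvT
    rw [hT, mem_image] at hvT
    obtain ⟨t0, _, ht0⟩ := hvT
    exact fiber_card f t0 ht0
  have htot : Fintype.card Ω = n * c0 := by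
    rw [← card_univ, Finset.card_eq_sum_card_fiberwise
      (f := fun t => f t) (t := T) (fun x _ => mem_image_of_mem f (mem_univ x))]
    rw [Finset.sum_congr rfl (fun v hv => hfib v hv), sum_const, smul_eq_mul]
  have hev : (univ.filter (fun t => P (f t))).card = (T.filter P).card * c0 := by
    rw [Finset.card_eq_sum_card_fiberwise
      (f := fun t => f t) (s := univ.filter (fun t => P (f t))) (t := T.filter P)
      (by intro x hx; simp only [Finset.mem_coe, mem_filter, mem_univ, true_and] at hx ⊢
          exact ⟨mem_image_of_mem f (mem_univ x), hx⟩)]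
    rw [Finset.sum_congr rfl (fun v hv => ?_), sum_const, smul_eq_mul]
    have hvT := (mem_filter.mp hv).1
    have hPv := (mem_filter.mp hv).2
    rw [← hfib v hvT]
    congr 1
    ext t
    simp only [mem_filter, mem_univ, true_and]
    constructor
    · rintro ⟨_, h⟩; exact h
    · intro h; exact ⟨by rw [h]; exact hPv, h⟩
  have h0T : (0 : ZMod N) ∈ T := by
    rw [hT, mem_image]; exact ⟨0, mem_univ 0, map_zero f⟩
  have hvT : v ∈ T := by rw [hT, mem_image]; exact ⟨t1, mem_univ t1, ht1⟩
  have hn2 : 2 ≤ n := by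
    rw [hn]
    have hsub : ({0, v} : Finset (ZMod N)) ⊆ T := by
      intro x hx; rcases mem_insert.mp hx with h | h
      · rwa [h]
      · rw [mem_singleton.mp h]; exact hvT
    calc 2 = ({0, v} : Finset (ZMod N)).card := by
              rw [card_insert_of_notMem (by simpa using (Ne.symm hv)), card_singleton]
         _ ≤ T.card := card_le_card hsub
  have hrange : ∀ x, x ∈ T ↔ x ∈ AddMonoidHom.range f := by
    intro x
    rw [hT, mem_image]
    constructor
    · rintro ⟨t, _, ht⟩; exact ⟨t, ht⟩
    · rintro ⟨t, ht⟩; exact ⟨t, mem_univ t, ht⟩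
  have hsets : ((T : Finset (ZMod N)) : Set (ZMod N)) = (f.range : Set (ZMod N)) :=
    Set.ext fun x => by simpa using hrange x
  have hcardR : Nat.card f.range = n := by
    have h1 := Nat.card_congr (Equiv.setCongr hsets)
    rw [Nat.card_coe_set_eq, Set.ncard_coe_finset] at h1
    exact h1.symm
  have hdvd : n ∣ N := by
    have h1 := AddSubgroup.card_addSubgroup_dvd_card f.range
    rwa [hcardR, Nat.card_zmod] at h1
  have hNpos : 0 < N := Nat.pos_of_ne_zero (NeZero.ne N)
  have hnpos : 0 < n := by omega
  set e := N / n with he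
  have hNe : N = n * e := (Nat.mul_div_cancel' hdvd).symm
  have hepos : 0 < e := by
    rcases Nat.eq_zero_or_pos e with h | h
    · rw [h, mul_zero] at hNe; omega
    · exact h
  have hkill : ∀ x ∈ T, e ∣ (ZMod.val x) := by
    intro x hx
    have hx' : x ∈ f.range := (hrange x).mp hx
    have h1 : addOrderOf x ∣ n := by
      rw [← hcardR]; exact AddSubgroup.addOrderOf_dvd_natCard f.range hx'
    have h2 : n • x = 0 := addOrderOf_dvd_iff_nsmul_eq_zero.mp h1
    have h3 : ((n : ZMod N)) * x = 0 := by rw [← nsmul_eq_mul]; exact h2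
    have h4 : ((n * x.val : ℕ) : ZMod N) = 0 := by
      push_cast [ZMod.natCast_zmod_val]; exact h3
    rw [ZMod.natCast_eq_zero_iff] at h4
    obtain ⟨cc, hcc⟩ := h4
    have h5 : n * x.val = n * (e * cc) := by rw [hcc, hNe]; ring
    exact ⟨cc, Nat.eq_of_mul_eq_mul_left hnpos h5⟩
  set D : Finset (ZMod N) := univ.filter (fun x => e ∣ x.val) with hD
  have hTD : T ⊆ D := fun x hx => by
    rw [hD, mem_filter]; exact ⟨mem_univ x, hkill x hx⟩
  have hvalcast : ∀ k : ℕ, k < n → (((k * e : ℕ) : ZMod N)).val = k * e := by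
    intro k hk
    rw [ZMod.val_natCast, Nat.mod_eq_of_lt]
    calc k * e < n * e := mul_lt_mul_of_pos_right hk hepos
    _ = N := hNe.symm
  have hdivlt : ∀ x : ZMod N, e ∣ x.val → x.val / e < n := by
    intro x hdx
    have hvl : x.val < N := ZMod.val_lt x
    by_contra hcon
    push_neg at hcon
    have h7 : n * e ≤ (x.val / e) * e := mul_le_mul_left hcon e
    have h8 : (x.val / e) * e = x.val := Nat.div_mul_cancel hdx
    omega
  have hDcard : D.card = n := by
    rw [← Finset.card_range n]
    apply Finset.card_bij' (fun x _ => x.val / e) (fun k _ => ((k * e : ℕ) : ZMod N))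
    · intro x hx
      rw [hD, mem_filter] at hx
      exact mem_range.mpr (hdivlt x hx.2)
    · intro k hk
      rw [mem_range] at hk
      rw [hD, mem_filter]
      refine ⟨mem_univ _, ?_⟩
      rw [hvalcast k hk]
      exact ⟨k, mul_comm k e⟩
    · intro x hx
      rw [hD, mem_filter] at hx
      rw [Nat.div_mul_cancel hx.2, ZMod.natCast_zmod_val]
    · intro k hk
      rw [mem_range] at hk
      rw [hvalcast k hk, mul_comm, Nat.mul_div_cancel_left k hepos]
  have hTeqD : T = D := Finset.eq_of_subset_of_card_le hTD (by rw [hDcard])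
  have hTP : n ≤ 4 * (T.filter P).card := by
    have hcount : (T.filter P).card
        = ((range n).filter (fun k => n < 3 * k ∧ 3 * k ≤ 2 * n)).card := by
      apply Finset.card_bij' (fun x _ => x.val / e) (fun k _ => ((k * e : ℕ) : ZMod N))
      · intro x hx
        rw [mem_filter, hTeqD, hD, mem_filter] at hx
        obtain ⟨⟨-, hdx⟩, hPx⟩ := hx
        obtain ⟨c, hc⟩ := hdx
        rw [hP] at hPx
        obtain ⟨h1, h2⟩ := hPx
        rw [mem_filter, mem_range]
        have hcval : x.val / e = c := by rw [hc, Nat.mul_div_cancel_left c hepos]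
        rw [hcval]
        have h1' : n < 3 * c := by
          by_contra hcon; push_neg at hcon
          have h9 : (3 * c) * e ≤ n * e := mul_le_mul_left hcon e
          have h10 : (3 * c) * e = 3 * (e * c) := by ring
          rw [hc] at h1
          omega
        have h2' : 3 * c ≤ 2 * n := by
          by_contra hcon; push_neg at hcon
          have h9 : (2 * n) * e < (3 * c) * e := mul_lt_mul_of_pos_right hcon hepos
          have h10 : (3 * c) * e = 3 * (e * c) := by ring
          have h11 : (2 * n) * e = 2 * (n * e) := by ring
          rw [hc] at h2
          omega
        exact ⟨by omega, h1', h2'⟩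
      · intro k hk
        rw [mem_filter, mem_range] at hk
        obtain ⟨hkn, h1, h2⟩ := hk
        rw [mem_filter, hTeqD, hD, mem_filter]
        refine ⟨⟨mem_univ _, ?_⟩, ?_⟩
        · rw [hvalcast k hkn]; exact ⟨k, mul_comm k e⟩
        · simp only [hP]
          rw [hvalcast k hkn]
          constructor
          · have h9 : n * e < (3 * k) * e := mul_lt_mul_of_pos_right h1 hepos
            have h10 : (3 * k) * e = 3 * (k * e) := by ring
            omega
          · have h9 : (3 * k) * e ≤ (2 * n) * e := mul_le_mul_left h2 e
            have h10 : (3 * k) * e = 3 * (k * e) := by ring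
            have h11 : (2 * n) * e = 2 * (n * e) := by ring
            omega
      · intro x hx
        rw [mem_filter, hTeqD, hD, mem_filter] at hx
        rw [Nat.div_mul_cancel hx.1.2, ZMod.natCast_zmod_val]
      · intro k hk
        rw [mem_filter, mem_range] at hk
        rw [hvalcast k hk.1, mul_comm, Nat.mul_div_cancel_left k hepos]
    rw [hcount]
    have hIco : (range n).filter (fun k => n < 3 * k ∧ 3 * k ≤ 2 * n)
        = Finset.Ico (n/3+1) (2*n/3+1) := by
      ext k
      simp only [mem_filter, mem_range, Finset.mem_Ico]
      omega
    rw [hIco, Nat.card_Ico]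
    have h9 : ∀ m : ℕ, 2 ≤ m → m ≤ 4 * ((2*m/3+1) - (m/3+1)) := by
      intro m hm
      obtain ⟨m', rfl | rfl | rfl⟩ : ∃ m', m = 3*m' ∨ m = 3*m'+1 ∨ m = 3*m'+2 := ⟨m/3, by omega⟩
      · have h1 : 2*(3*m')/3 = 2*m' := by omega
        have h2 : (3*m')/3 = m' := by omega
        rw [h1, h2]; omega
      · have h1 : 2*(3*m'+1)/3 = 2*m' := by omega
        have h2 : (3*m'+1)/3 = m' := by omega
        rw [h1, h2]; omega
      · have h1 : 2*(3*m'+2)/3 = 2*m'+1 := by omega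
        have h2 : (3*m'+2)/3 = m' := by omega
        rw [h1, h2]; omega
    exact h9 n hn2
  calc Fintype.card Ω = n * c0 := htot
    _ ≤ (4 * (T.filter P).card) * c0 := Nat.mul_le_mul_right c0 hTP
    _ = 4 * ((T.filter P).card * c0) := by ring
    _ = 4 * (univ.filter (fun t => P (f t))).card := by rw [hev]


end Erdos1934Aux

open Erdos1934Aux

section MainProof

open Finset

theorem stmt14 {G : Type*} [AddCommGroup G] (B : Finset G) (hB : (0 : G) ∉ B)
    (w : G → ℕ) (hw : ∀ b ∈ B, 0 < w b) :
    ∃ A ⊆ B, (∀ x ∈ A, ∀ y ∈ A, x + y ∉ A) ∧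
      (1 / 4 : ℝ) * ∑ b ∈ B, (w b : ℝ) ≤ ∑ a ∈ A, (w a : ℝ) := by
  classical
  have hchar : ∀ b : ↥B, ∃ cc : CharacterModule G, cc (b : G) ≠ 0 := fun b =>
    CharacterModule.exists_character_apply_ne_zero_of_ne_zero (fun h => hB (h ▸ b.2))
  choose c hc using hchar
  let d : ↥B → (G →+ AddCircle (1:ℚ)) := fun b => c b
  have hdc : ∀ b : ↥B, d b (b : G) ≠ 0 := hc
  set N : ℕ := ∏ p ∈ (Finset.univ : Finset (↥B × ↥B)), addOrderOf (d p.1 (p.2 : G)) with hNdef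
  have hNpos : 0 < N := Finset.prod_pos (fun p _ => (torsion _).addOrderOf_pos)
  haveI : NeZero N := ⟨hNpos.ne'⟩
  have hNkill : ∀ b b' : ↥B, N • (d b (b' : G)) = 0 := by
    intro b b'
    apply addOrderOf_dvd_iff_nsmul_eq_zero.mp
    exact Finset.dvd_prod_of_mem _ (Finset.mem_univ (b, b'))
  -- extract numerators
  have hm : ∀ b b' : ↥B, ∃ mm : ℕ, mm < N ∧
      d b (b' : G) = (((mm : ℚ)/N : ℚ) : AddCircle (1:ℚ)) := by
    intro b b'
    set z := d b (b' : G) with hz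
    have h1 : ((N • rep z : ℚ) : AddCircle (1:ℚ)) = 0 := by
      rw [AddCircle.coe_nsmul, coe_rep]; exact hNkill b b'
    rw [AddCircle.coe_eq_zero_iff] at h1
    obtain ⟨k, hk⟩ := h1
    have hk' : (k : ℚ) = N * rep z := by
      rw [zsmul_eq_mul, mul_one] at hk
      rw [hk, nsmul_eq_mul]
    have hr0 := (rep_mem z).1
    have hr1 := (rep_mem z).2
    have hNQ : (0:ℚ) < N := by exact_mod_cast hNpos
    have hk0 : 0 ≤ k := by
      have : (0:ℚ) ≤ k := by rw [hk']; positivity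
      exact_mod_cast this
    have hkN : k < N := by
      have : (k:ℚ) < N := by rw [hk']; nlinarith
      exact_mod_cast this
    refine ⟨k.toNat, ?_, ?_⟩
    · omega
    · have hrep : rep z = ((k.toNat : ℚ))/N := by
        rw [eq_div_iff hNQ.ne']
        have : ((k.toNat : ℤ) : ℚ) = (k:ℚ) := by rw [Int.toNat_of_nonneg hk0]
        push_cast at this ⊢
        linarith [hk']
      rw [← hrep, coe_rep]
  choose m hmlt hmeq using hm
  have hmpos : ∀ b : ↥B, 0 < m b b := by
    intro b
    rcases Nat.eq_zero_or_pos (m b b) with h | h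
    · exfalso
      apply hdc b
      rw [hmeq b b, h]
      norm_num
    · exact h
  -- the linear forms
  have Fex : ∀ b' : ↥B, ∃ F : (↥B → ZMod N) →+ ZMod N,
      ∀ t, F t = ∑ b : ↥B, t b * (m b b' : ZMod N) := by
    intro b'
    exact ⟨{ toFun := fun t => ∑ b : ↥B, t b * (m b b' : ZMod N),
             map_zero' := by simp,
             map_add' := fun s t => by
               simp only [Pi.add_apply, add_mul]
               rw [Finset.sum_add_distrib] }, fun _ => rfl⟩
  choose F hF using Fex
  -- the combined characters
  set ψ : (↥B → ZMod N) → (G →+ AddCircle (1:ℚ)) :=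
    fun t => ∑ b : ↥B, (t b).val • d b with hψ
  -- bridge
  have bridge : ∀ (t : ↥B → ZMod N) (b' : ↥B), ψ t (b' : G) = iota N (F b' t) := by
    intro t b'
    have hS : F b' t = ((∑ b : ↥B, (t b).val * m b b' : ℕ) : ZMod N) := by
      rw [hF]
      push_cast
      refine Finset.sum_congr rfl fun b _ => ?_
      rw [ZMod.natCast_zmod_val]
    rw [hS, iota_natCast]
    rw [hψ]
    rw [AddMonoidHom.finset_sum_apply]
    have hterm : ∀ b : ↥B, ((t b).val • d b) (b' : G)
        = (((((t b).val * m b b' : ℕ) : ℚ) / (N:ℚ) : ℚ) : AddCircle (1:ℚ)) := by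
      intro b
      have h1 : ((t b).val • d b) (b':G) = (t b).val • (d b (b':G)) := rfl
      rw [h1, hmeq b b', ← AddCircle.coe_nsmul]
      congr 1
      push_cast
      rw [nsmul_eq_mul]
      ring
    rw [Finset.sum_congr rfl (fun b _ => hterm b)]
    have h2 := (map_sum (QuotientAddGroup.mk' (AddSubgroup.zmultiples (1:ℚ)))
      (fun b : ↥B => ((((t b).val * m b b' : ℕ) : ℚ) / (N:ℚ))) Finset.univ).symm
    have h3 : ∀ q : ℚ, (QuotientAddGroup.mk' (AddSubgroup.zmultiples (1:ℚ))) q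
        = (q : AddCircle (1:ℚ)) := fun q => rfl
    simp only [h3] at h2
    rw [h2]
    congr 1
    rw [← Finset.sum_div]
    congr 1
    push_cast
    rfl
  -- event equivalence
  have hevent : ∀ (t : ↥B → ZMod N) (b' : ↥B),
      (ψ t (b':G) ∈ Imid ↔ (N < 3 * (F b' t).val ∧ 3 * (F b' t).val ≤ 2 * N)) := by
    intro t b'
    rw [bridge t b', iota_mem_iff]
  -- counting for each b'
  have hcnt : ∀ b' : ↥B, Fintype.card (↥B → ZMod N) ≤
      4 * (Finset.univ.filter
        (fun t : ↥B → ZMod N => N < 3 * (F b' t).val ∧ 3 * (F b' t).val ≤ 2 * N)).card := by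
    intro b'
    have hv : ((m b' b' : ℕ) : ZMod N) ≠ 0 := by
      intro h
      rw [ZMod.natCast_eq_zero_iff] at h
      have h1 := Nat.le_of_dvd (hmpos b') h
      have h2 := hmlt b' b'
      omega
    have ht1 : F b' (fun b => if b = b' then 1 else 0) = ((m b' b' : ℕ) : ZMod N) := by
      rw [hF]
      rw [Finset.sum_eq_single b']
      · simp
      · intro b _ hbb; simp [hbb]
      · intro h; exact absurd (Finset.mem_univ b') h
    exact count_main (F b') hv _ ht1
  -- averaging
  have hswap : ∀ b' : ↥B,
      (∑ t : ↥B → ZMod N, if (N < 3 * (F b' t).val ∧ 3 * (F b' t).val ≤ 2 * N) then w ↑b' else 0)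
      = (Finset.univ.filter
          (fun t : ↥B → ZMod N => N < 3 * (F b' t).val ∧ 3 * (F b' t).val ≤ 2 * N)).card * w ↑b' := by
    intro b'
    rw [← Finset.sum_filter, Finset.sum_const, smul_eq_mul]
  have havg : Fintype.card (↥B → ZMod N) * (∑ b' : ↥B, w ↑b') ≤
      ∑ t : ↥B → ZMod N, 4 * ∑ b' ∈ Finset.univ.filter
        (fun b' : ↥B => N < 3 * (F b' t).val ∧ 3 * (F b' t).val ≤ 2 * N), w ↑b' := by
    have e1 : ∑ t : ↥B → ZMod N, 4 * ∑ b' ∈ Finset.univ.filter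
        (fun b' : ↥B => N < 3 * (F b' t).val ∧ 3 * (F b' t).val ≤ 2 * N), w ↑b'
        = 4 * ∑ b' : ↥B, (Finset.univ.filter
          (fun t : ↥B → ZMod N => N < 3 * (F b' t).val ∧ 3 * (F b' t).val ≤ 2 * N)).card * w ↑b' := by
      rw [← Finset.mul_sum]
      congr 1
      calc ∑ t : ↥B → ZMod N, ∑ b' ∈ Finset.univ.filter
            (fun b' : ↥B => N < 3 * (F b' t).val ∧ 3 * (F b' t).val ≤ 2 * N), w ↑b'
          = ∑ t : ↥B → ZMod N, ∑ b' : ↥B,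
            (if (N < 3 * (F b' t).val ∧ 3 * (F b' t).val ≤ 2 * N) then w ↑b' else 0) := by
            refine Finset.sum_congr rfl fun t _ => ?_
            rw [Finset.sum_filter]
        _ = ∑ b' : ↥B, ∑ t : ↥B → ZMod N,
            (if (N < 3 * (F b' t).val ∧ 3 * (F b' t).val ≤ 2 * N) then w ↑b' else 0) :=
            Finset.sum_comm
        _ = ∑ b' : ↥B, (Finset.univ.filter
            (fun t : ↥B → ZMod N => N < 3 * (F b' t).val ∧ 3 * (F b' t).val ≤ 2 * N)).card * w ↑b' :=
            Finset.sum_congr rfl fun b' _ => hswap b'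
    rw [e1, Finset.mul_sum, Finset.mul_sum]
    refine Finset.sum_le_sum fun b' _ => ?_
    calc Fintype.card (↥B → ZMod N) * w ↑b'
        ≤ (4 * (Finset.univ.filter
            (fun t : ↥B → ZMod N => N < 3 * (F b' t).val ∧ 3 * (F b' t).val ≤ 2 * N)).card) * w ↑b' :=
          Nat.mul_le_mul_right _ (hcnt b')
      _ = 4 * ((Finset.univ.filter
            (fun t : ↥B → ZMod N => N < 3 * (F b' t).val ∧ 3 * (F b' t).val ≤ 2 * N)).card * w ↑b') := by
          ring
  haveI : Nonempty (↥B → ZMod N) := ⟨fun _ => 0⟩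
  obtain ⟨t, -, ht⟩ := Finset.exists_le_of_sum_le (s := (Finset.univ : Finset (↥B → ZMod N)))
    (f := fun _ => ∑ b' : ↥B, w ↑b')
    (g := fun t => 4 * ∑ b' ∈ Finset.univ.filter
        (fun b' : ↥B => N < 3 * (F b' t).val ∧ 3 * (F b' t).val ≤ 2 * N), w ↑b')
    Finset.univ_nonempty
    (by rw [Finset.sum_const, smul_eq_mul, Finset.card_univ]; exact havg)
  -- construct A
  set A' : Finset ↥B := Finset.univ.filter
    (fun b' : ↥B => N < 3 * (F b' t).val ∧ 3 * (F b' t).val ≤ 2 * N) with hA'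
  refine ⟨A'.image Subtype.val, ?_, ?_, ?_⟩
  · intro x hx
    obtain ⟨b', _, rfl⟩ := Finset.mem_image.mp hx
    exact b'.2
  · intro x hx y hy hxy
    obtain ⟨bx, hbx, rfl⟩ := Finset.mem_image.mp hx
    obtain ⟨byy, hby, rfl⟩ := Finset.mem_image.mp hy
    obtain ⟨bz, hbz, hz⟩ := Finset.mem_image.mp hxy
    have h1 : ψ t (bx:G) ∈ Imid := (hevent t bx).mpr (Finset.mem_filter.mp hbx).2
    have h2 : ψ t (byy:G) ∈ Imid := (hevent t byy).mpr (Finset.mem_filter.mp hby).2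
    have h3 : ψ t (bz:G) ∈ Imid := (hevent t bz).mpr (Finset.mem_filter.mp hbz).2
    rw [hz, map_add] at h3
    exact Imid_sumfree h1 h2 h3
  · have hsumA : ∑ a ∈ A'.image Subtype.val, w a = ∑ b' ∈ A', w ↑b' :=
      Finset.sum_image (fun x _ y _ h => Subtype.coe_injective h)
    have hsumB : ∑ b ∈ B, w b = ∑ b' : ↥B, w ↑b' := (Finset.sum_coe_sort B w).symm
    have hnat : ∑ b ∈ B, w b ≤ 4 * ∑ a ∈ A'.image Subtype.val, w a := by
      rw [hsumA, hsumB]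
      exact ht
    have hreal : ((∑ b ∈ B, w b : ℕ) : ℝ) ≤ ((4 * ∑ a ∈ A'.image Subtype.val, w a : ℕ) : ℝ) :=
      Nat.cast_le.mpr hnat
    push_cast at hreal
    linarith

end MainProof
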